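/- Let ℓ ≥ 2 have binary power representation ℓ = 2^{n_1} + ⋯ + 2^{n_k} with n_1 > n_2 > ⋯ > n_k ≥ 0 and L = (n_1,…,n_k). Then the security of T_L equals R(T_L) = 2ℓ − n_1 − k − 1. -/

import Mathlib

/-- Proper binary trees: every internal vertex has exactly two children. -/
inductive BTree : Type
  | leaf : BTree
  | node : BTree → BTree → BTree
  deriving DecidableEq

namespace BTree

/-- The rank (protection number) of the root of a proper binary tree:
the minimum distance from the root to a leaf descendant. -/
def rank : BTree → ℕ
  | leaf => 0
  | node l r => min l.rank r.rank + 1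

/-- The security of a proper binary tree: the sum of the ranks of all vertices. -/
def security : BTree → ℕ
  | leaf => 0
  | node l r => (node l r).rank + l.security + r.security

/-- The number of leaves. -/
def leafCount : BTree → ℕ
  | leaf => 1
  | node l r => l.leafCount + r.leafCount

/-- The height: maximum distance from the root to a leaf. -/
def height : BTree → ℕ
  | leaf => 0
  | node l r => max l.height r.height + 1

/-- A tree is complete if all leaves are at the same depth. -/
def IsComplete : BTree → Prop
  | leaf => True
  | node l r => IsComplete l ∧ IsComplete r ∧ l.height = r.height

/-- The subtree at a given position (a list of directions from the root;
`false` = first child, `true` = second child), if the position exists. -/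
def subtreeAt : BTree → List Bool → Option BTree
  | t, [] => some t
  | leaf, _ :: _ => none
  | node l _, false :: p => subtreeAt l p
  | node _ r, true :: p => subtreeAt r p

/-- Replace the subtree at a given position by `s`. -/
def replaceAt : BTree → List Bool → BTree → BTree
  | _, [], s => s
  | leaf, _ :: _, _ => leaf
  | node l r, false :: p, s => node (replaceAt l p s) r
  | node l r, true :: p, s => node l (replaceAt r p s)

/-- The rank of the vertex at position `p` in `T` (rank of a vertex only depends
on the subtree consisting of the vertex and its descendants). -/
def rankAt (T : BTree) (p : List Bool) : ℕ := ((T.subtreeAt p).map rank).getD 0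

/-- The vertex at position `p` in `T` is saturated: its subtree is complete, but the
subtree of none of its (proper) ancestors is complete. -/
def Saturated (T : BTree) (p : List Bool) : Prop :=
  (∃ s, T.subtreeAt p = some s ∧ IsComplete s) ∧
  ∀ q s, q <+: p → q ≠ p → T.subtreeAt q = some s → ¬ IsComplete s

/-- The complete binary tree of height `m` (with `2 ^ m` leaves). -/
def completeTree : ℕ → BTree
  | 0 => leaf
  | m + 1 => node (completeTree m) (completeTree m)

/-- The tree `T_L` for `L = (n₁, …, n_k)`: a binary caterpillar whose spine vertices carry
complete binary trees with `2 ^ nᵢ` leaves. -/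
def TL : List ℕ → BTree
  | [] => leaf
  | n :: ns => ns.foldl (fun acc m => node acc (completeTree m)) (completeTree n)

/-- Helper for the almost complete tree: a complete binary tree of height `m`
whose leftmost `r` leaves each receive two leaf children. -/
def buildF : ℕ → ℕ → BTree
  | 0, r => if r = 0 then leaf else node leaf leaf
  | m + 1, r => node (buildF m (min r (2 ^ m))) (buildF m (r - 2 ^ m))

/-- The almost complete ("good") tree `F(ℓ)` on `ℓ` leaves. -/
def F (ℓ : ℕ) : BTree := buildF (Nat.log 2 ℓ) (ℓ - 2 ^ Nat.log 2 ℓ)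

end BTree


namespace BTree

lemma rank_completeTree (m : ℕ) : (completeTree m).rank = m := by
  induction m with
  | zero => rfl
  | succ n ih => simp [completeTree, rank, ih]

lemma security_completeTree (m : ℕ) : (completeTree m).security + m + 2 = 2 ^ (m + 1) := by
  induction m with
  | zero => rfl
  | succ n ih =>
    have h : (2:ℕ) ^ (n + 1 + 1) = 2 * 2 ^ (n + 1) := by ring
    simp only [completeTree, security, rank, rank_completeTree, min_self, h]
    omega

lemma foldl_security (ns : List ℕ) : ∀ acc : BTree, (acc.rank :: ns).Chain' (· > ·) →
    (ns.foldl (fun a m => node a (completeTree m)) acc).security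
      = acc.security + (ns.map (fun m => (completeTree m).security + m + 1)).sum := by
  induction ns with
  | nil => intro acc _; simp
  | cons m ns ih =>
    intro acc h
    simp only [List.Chain', List.isChain_cons_cons] at h
    have h1 : m < acc.rank := h.1
    have hrank : (node acc (completeTree m)).rank = m + 1 := by
      simp only [rank, rank_completeTree]
      omega
    have hchain : ((node acc (completeTree m)).rank :: ns).Chain' (· > ·) := by
      rw [hrank]
      cases ns with
      | nil => simp [List.Chain']
      | cons b bs =>
        simp only [List.Chain', List.isChain_cons_cons]
        rw [List.isChain_cons_cons] at h
        exact ⟨by have := h.2.1; omega, h.2.2⟩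
    have hsec : (node acc (completeTree m)).security
        = m + 1 + acc.security + (completeTree m).security := by
      rw [security, hrank]
    rw [List.foldl_cons, ih _ hchain, hsec, List.map_cons, List.sum_cons]
    omega

lemma sum_aux (L : List ℕ) :
    (L.map (fun m => (completeTree m).security + m + 1)).sum + L.length
      = 2 * (L.map (2 ^ ·)).sum := by
  induction L with
  | nil => simp
  | cons a L ih =>
    have h1 := security_completeTree a
    have h2 : (2:ℕ) ^ (a + 1) = 2 * 2 ^ a := by ring
    simp only [List.map_cons, List.sum_cons, List.length_cons]
    omega

end BTree

open BTree in
/-- The security of `T_L` for `ℓ ≥ 2` with binary power representation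
`L = (n₁, …, n_k)` equals `2ℓ − n₁ − k − 1`. -/
theorem security_TL (ℓ n1 : ℕ) (L' : List ℕ) (hℓ : 2 ≤ ℓ)
    (hdec : (n1 :: L').Chain' (· > ·))
    (hsum : ((n1 :: L').map (2 ^ ·)).sum = ℓ) :
    (TL (n1 :: L')).security + n1 + (n1 :: L').length + 1 = 2 * ℓ := by
  have hTL : TL (n1 :: L') = L'.foldl (fun acc m => node acc (completeTree m)) (completeTree n1) := rfl
  have hchain : ((completeTree n1).rank :: L').Chain' (· > ·) := by
    rw [rank_completeTree]; exact hdec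
  have hsec := foldl_security L' (completeTree n1) hchain
  have hsum' : (2:ℕ) ^ n1 + (L'.map (2 ^ ·)).sum = ℓ := by
    simpa using hsum
  have h1 := security_completeTree n1
  have h2 : (2:ℕ) ^ (n1 + 1) = 2 * 2 ^ n1 := by ring
  have h3 := sum_aux L'
  rw [hTL, hsec]
  simp only [List.length_cons]
  omega
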